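/- arXiv:1002.3128 — 3 statements merged into one kernel-verified Lean document; each statement's English description precedes it below -/
import Mathlib

section
/- Let X be an n×p matrix with columns x_j, let F̄ ⊆ {1,…,p} be such that X_F̄ has full column rank, and define μ_X(F̄) = max_{j∉F̄} ‖(X_F̄^T X_F̄)^{-1} X_F̄^T x_j‖₁. If r = X_F̄ u for some vector u (i.e., r lies in the column span of X_F̄), then max_{j∉F̄} |x_j^T r| ≤ μ_X(F̄) · max_{i∈F̄} |x_i^T r|. -/
open Finset Matrix

/-- Mutual incoherence lemma. Suppose for each `j ∉ F̄` the regression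
coefficient vector `c` of `x_j` on the columns `X_F̄` (i.e. `c` supported in `F̄`
with `X_F̄ᵀ x_j = X_F̄ᵀ X c`, which equals `(X_F̄ᵀX_F̄)⁻¹X_F̄ᵀ x_j` when `X_F̄` has
full column rank) has `ℓ₁`-norm at most `μ`. If the residual `r = X u` lies in the
column span of `X_F̄` (`u` supported in `F̄`), then
`max_{j∉F̄} |x_jᵀ r| ≤ μ · max_{i∈F̄} |x_iᵀ r|`. -/
theorem mutual_incoherence_correlation_bound
    {n p : ℕ} (X : Matrix (Fin n) (Fin p) ℝ)
    (Fbar : Finset (Fin p)) (hne : Fbar.Nonempty) (μ : ℝ)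
    (hc : ∀ j ∉ Fbar, ∃ c : Fin p → ℝ,
      (∀ m ∉ Fbar, c m = 0) ∧ (∑ m, |c m|) ≤ μ ∧
      ∀ i ∈ Fbar, (∑ k, X k i * X k j) = ∑ k, X k i * X.mulVec c k)
    (r : Fin n → ℝ) (u : Fin p → ℝ)
    (hu : ∀ j ∉ Fbar, u j = 0) (hr : r = X.mulVec u) :
    ∀ j ∉ Fbar,
      |∑ i, X i j * r i| ≤ μ * Fbar.sup' hne (fun i => |∑ k, X k i * r k|) := by
  intro j hj
  obtain ⟨c, hc0, hc1, hc2⟩ := hc j hj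
  set M := Fbar.sup' hne (fun i => |∑ k, X k i * r k|) with hM
  obtain ⟨i0, hi0⟩ := hne
  have hM0 : 0 ≤ M :=
    le_trans (abs_nonneg _) (Finset.le_sup' (fun i => |∑ k, X k i * r k|) hi0)
  have hMb : ∀ t ∈ Fbar, |∑ k, X k t * r k| ≤ M := fun t ht =>
    Finset.le_sup' (fun i => |∑ k, X k i * r k|) ht
  have key : (∑ i, X i j * r i) = ∑ t, c t * ∑ k, X k t * r k := by
    have h1 : (∑ i, X i j * r i) = ∑ m, u m * ∑ i, X i m * X i j := by
      simp only [hr, mulVec, dotProduct, Finset.mul_sum]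
      rw [Finset.sum_comm]
      exact Finset.sum_congr rfl fun m _ => Finset.sum_congr rfl fun i _ => by ring
    have h2 : (∑ m, u m * ∑ i, X i m * X i j)
        = ∑ m, u m * ∑ i, X i m * X.mulVec c i := by
      congr 1; ext m
      by_cases hm : m ∈ Fbar
      · rw [hc2 m hm]
      · simp [hu m hm]
    have h3 : (∑ m, u m * ∑ i, X i m * X.mulVec c i)
        = ∑ i, r i * X.mulVec c i := by
      set v := X.mulVec c with hv
      simp only [hr, mulVec, dotProduct, Finset.mul_sum, Finset.sum_mul]
      rw [Finset.sum_comm]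
      exact Finset.sum_congr rfl fun i _ => Finset.sum_congr rfl fun m _ => by ring
    have h4 : (∑ i, r i * X.mulVec c i) = ∑ t, c t * ∑ k, X k t * r k := by
      simp only [mulVec, dotProduct, Finset.mul_sum]
      rw [Finset.sum_comm]
      exact Finset.sum_congr rfl fun t _ => Finset.sum_congr rfl fun i _ => by ring
    rw [h1, h2, h3, h4]
  calc |∑ i, X i j * r i| = |∑ t, c t * ∑ k, X k t * r k| := by rw [key]
    _ ≤ ∑ t, |c t * ∑ k, X k t * r k| := Finset.abs_sum_le_sum_abs _ _
    _ ≤ ∑ t, |c t| * M := by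
        apply Finset.sum_le_sum
        intro t _
        rw [abs_mul]
        by_cases ht : t ∈ Fbar
        · exact mul_le_mul_of_nonneg_left (hMb t ht) (abs_nonneg _)
        · simp [hc0 t ht]
    _ = (∑ t, |c t|) * M := by rw [Finset.sum_mul]
    _ ≤ μ * M := mul_le_mul_of_nonneg_right hc1 hM0
end

section
/- Under the conditions of the previous lemma, if additionally μ_X(F̄) < 1 and r = X_F̄ u ≠ 0 with some i ∈ F̄ satisfying x_i^T r ≠ 0, then the unweighted forward stepwise selection argmax_j |x_j^T r| is attained at an index in F̄. -/
open Finset Matrix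

/-- Under the mutual incoherence condition with `μ_X(F̄) < 1`, if the
residual `r = X u` lies in the span of the signal columns and some signal column has
nonzero correlation with `r`, then the unweighted forward stepwise criterion
`argmax_j |x_jᵀ r|` is attained at an index in `F̄`: every noise correlation is
strictly smaller than the maximal signal correlation. -/
theorem stepwise_selects_signal_under_incoherence
    {n p : ℕ} (X : Matrix (Fin n) (Fin p) ℝ)
    (Fbar : Finset (Fin p)) (hne : Fbar.Nonempty) (μ : ℝ) (hμ : μ < 1)
    (hc : ∀ j ∉ Fbar, ∃ c : Fin p → ℝ,
      (∀ m ∉ Fbar, c m = 0) ∧ (∑ m, |c m|) ≤ μ ∧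
      ∀ i ∈ Fbar, (∑ k, X k i * X k j) = ∑ k, X k i * X.mulVec c k)
    (r : Fin n → ℝ) (u : Fin p → ℝ)
    (hu : ∀ j ∉ Fbar, u j = 0) (hr : r = X.mulVec u)
    (hnz : ∃ i ∈ Fbar, (∑ k, X k i * r k) ≠ 0) :
    ∀ j ∉ Fbar,
      |∑ i, X i j * r i| < Fbar.sup' hne (fun i => |∑ k, X k i * r k|) := by
  intro j hj
  obtain ⟨c, hc0, hcμ, hceq⟩ := hc j hj
  set f : Fin p → ℝ := fun i => |∑ k, X k i * r k| with hf
  set M : ℝ := Fbar.sup' hne f with hM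
  have hM0 : 0 < M := by
    obtain ⟨i, hi, hiz⟩ := hnz
    exact lt_of_lt_of_le (abs_pos.2 hiz) (Finset.le_sup' f hi)
  have hrk : ∀ k, r k = ∑ l, X k l * u l := by
    intro k; rw [hr]; rfl
  have e1 : ∀ q : Fin p, (∑ i, X i q * r i) = ∑ l, u l * (∑ k, X k l * X k q) := by
    intro q
    simp only [hrk, Finset.mul_sum, Finset.sum_mul]
    rw [Finset.sum_comm]
    exact Finset.sum_congr rfl fun l _ => Finset.sum_congr rfl fun k _ => by ring
  have key : (∑ i, X i j * r i) = ∑ m, c m * (∑ k, X k m * r k) := by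
    have step2 : ∀ l, u l * (∑ k, X k l * X k j)
        = u l * (∑ k, X k l * X.mulVec c k) := by
      intro l
      by_cases hl : l ∈ Fbar
      · rw [hceq l hl]
      · simp [hu l hl]
    have e2 : ∀ l, u l * (∑ k, X k l * X.mulVec c k)
        = ∑ m, c m * (u l * (∑ k, X k l * X k m)) := by
      intro l
      have hmv : ∀ k, X.mulVec c k = ∑ m, X k m * c m := fun k => rfl
      simp only [hmv, Finset.mul_sum, Finset.sum_mul]
      rw [Finset.sum_comm]
      exact Finset.sum_congr rfl fun m _ => Finset.sum_congr rfl fun k _ => by ring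
    rw [e1 j]
    simp only [step2, e2]
    rw [Finset.sum_comm]
    refine Finset.sum_congr rfl fun m _ => ?_
    rw [e1 m, Finset.mul_sum]
  calc |∑ i, X i j * r i| = |∑ m, c m * (∑ k, X k m * r k)| := by rw [key]
    _ ≤ ∑ m, |c m * (∑ k, X k m * r k)| := Finset.abs_sum_le_sum_abs _ _
    _ ≤ ∑ m, |c m| * M := by
        refine Finset.sum_le_sum fun m _ => ?_
        rw [abs_mul]
        by_cases hm : m ∈ Fbar
        · exact mul_le_mul_of_nonneg_left (Finset.le_sup' f hm) (abs_nonneg _)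
        · simp [hc0 m hm]
    _ = (∑ m, |c m|) * M := (Finset.sum_mul _ _ _).symm
    _ ≤ μ * M := mul_le_mul_of_nonneg_right hcμ hM0.le
    _ < 1 * M := by nlinarith
    _ = M := one_mul M
end

section
/- Let X be an n×p matrix with (1/n)‖x_j‖₂² = 1 for all j, F̄ ⊆ {1,…,p} with ρ_X(F̄) > 0, and β, β' two vectors supported in F̄ with β' the least-squares minimizer over support F̄ for response y. If max_{i∈F̄}|x_i^T(Xβ − y)| ≤ ε, then ‖β − β'‖₂ ≤ ε √|F̄| / (n ρ_X(F̄)) · √n = ε ρ_X(F̄)^{-1} √(|F̄|/n). -/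
open Finset Matrix

/-- If `β, β'` are supported in `F̄`, `β'` is the constrained
least-squares minimizer over support `F̄`, the restricted eigenvalue `ρ_X(F̄) = ρ > 0`,
columns are normalized, and `max_{i∈F̄}|x_iᵀ(Xβ − y)| ≤ ε`, then
`‖β − β'‖₂ ≤ ε ρ⁻¹ √(|F̄|/n)`. -/
theorem ls_distance_bound_from_correlation
    {n p : ℕ} (hn : 0 < n) (X : Matrix (Fin n) (Fin p) ℝ) (y : Fin n → ℝ)
    (hnorm : ∀ j : Fin p, (1 / (n : ℝ)) * ∑ i, (X i j) ^ 2 = 1)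
    (Fbar : Finset (Fin p)) (ρ : ℝ) (hρ : 0 < ρ)
    (hre : ∀ v : Fin p → ℝ, (∀ j ∉ Fbar, v j = 0) → v ≠ 0 →
      ρ * ∑ j, (v j) ^ 2 ≤ (1 / (n : ℝ)) * ∑ i, (X.mulVec v i) ^ 2)
    (β β' : Fin p → ℝ)
    (hβ : ∀ j ∉ Fbar, β j = 0) (hβ' : ∀ j ∉ Fbar, β' j = 0)
    (hmin : ∀ v : Fin p → ℝ, (∀ j ∉ Fbar, v j = 0) →
      ∑ i, (X.mulVec β' i - y i) ^ 2 ≤ ∑ i, (X.mulVec v i - y i) ^ 2)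
    (ε : ℝ)
    (hε : ∀ i ∈ Fbar, |∑ k, X k i * (X.mulVec β k - y k)| ≤ ε) :
    Real.sqrt (∑ j, (β j - β' j) ^ 2) ≤
      ε / ρ * Real.sqrt ((Fbar.card : ℝ) / (n : ℝ)) := by
  have hnR : (0:ℝ) < n := by exact_mod_cast hn
  set δ : Fin p → ℝ := fun j => β j - β' j with hδdef
  -- normal equations
  have hB : ∀ j ∈ Fbar, ∑ i, X i j * (X.mulVec β' i - y i) = 0 := by
    intro j hj
    set B := ∑ i, X i j * (X.mulVec β' i - y i) with hBdef
    have hC : ∑ i, (X i j)^2 = (n:ℝ) := by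
      have h := hnorm j
      field_simp at h
      linarith
    have key : ∀ t : ℝ, 0 ≤ 2 * t * B + t^2 * n := by
      intro t
      have hv : ∀ k ∉ Fbar, (fun k => β' k + t * if k = j then (1:ℝ) else 0) k = 0 := by
        intro k hk
        have hkj : k ≠ j := fun h => hk (h ▸ hj)
        simp [hβ' k hk, hkj]
      have h := hmin _ hv
      have hmv : ∀ i, X.mulVec (fun k => β' k + t * if k = j then (1:ℝ) else 0) i
          = X.mulVec β' i + t * X i j := by
        intro i
        simp only [Matrix.mulVec, dotProduct, mul_add, Finset.sum_add_distrib,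
          mul_ite, mul_one, mul_zero]
        congr 1
        rw [Finset.sum_ite_eq' Finset.univ j (fun k => X i k * t)]
        simp [mul_comm]
      simp only [hmv] at h
      have expand : ∑ i, (X.mulVec β' i + t * X i j - y i) ^ 2
          = ∑ i, (X.mulVec β' i - y i) ^ 2 + 2 * t * B + t^2 * n := by
        rw [hBdef, ← hC, Finset.mul_sum, Finset.mul_sum, ← Finset.sum_add_distrib,
          ← Finset.sum_add_distrib]
        apply Finset.sum_congr rfl
        intro i _; ring
      rw [expand] at h
      linarith
    have h1 := key (-B / n)
    have hne : (n:ℝ) ≠ 0 := ne_of_gt hnR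
    have h2 : 2 * (-B / (n:ℝ)) * B + (-B / (n:ℝ))^2 * (n:ℝ) = -(B^2)/(n:ℝ) := by
      field_simp
      ring
    rw [h2] at h1
    have h3 : 0 ≤ -(B^2) := by
      have := mul_nonneg h1 hnR.le
      rwa [div_mul_cancel₀ _ hne] at this
    have h4 : B^2 = 0 := le_antisymm (by linarith) (sq_nonneg B)
    exact pow_eq_zero_iff two_ne_zero |>.mp h4
  -- cross correlation bound
  have hcorr : ∀ j ∈ Fbar, |∑ i, X i j * X.mulVec δ i| ≤ ε := by
    intro j hj
    have hlin : ∀ i, X.mulVec δ i = X.mulVec β i - X.mulVec β' i := by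
      intro i
      simp only [hδdef, Matrix.mulVec, dotProduct, mul_sub]
      rw [Finset.sum_sub_distrib]
    have heq : ∑ i, X i j * X.mulVec δ i = ∑ i, X i j * (X.mulVec β i - y i) := by
      have := hB j hj
      calc ∑ i, X i j * X.mulVec δ i
          = ∑ i, (X i j * (X.mulVec β i - y i) - X i j * (X.mulVec β' i - y i)) := by
            apply Finset.sum_congr rfl
            intro i _
            rw [hlin i]; ring
        _ = ∑ i, X i j * (X.mulVec β i - y i) - ∑ i, X i j * (X.mulVec β' i - y i) := by
            rw [Finset.sum_sub_distrib]
        _ = ∑ i, X i j * (X.mulVec β i - y i) := by rw [this]; ring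
    rw [heq]
    exact hε j hj
  set S := ∑ j, (δ j)^2 with hSdef
  have hSnn : 0 ≤ S := Finset.sum_nonneg fun j _ => sq_nonneg _
  by_cases hδ0 : δ = 0
  · have hS0 : S = 0 := by simp [hSdef, hδ0]
    rw [hS0, Real.sqrt_zero]
    rcases Fbar.eq_empty_or_nonempty with h | h
    · simp [h]
    · obtain ⟨j, hj⟩ := h
      have hε0 : 0 ≤ ε := le_trans (abs_nonneg _) (hε j hj)
      positivity
  · -- main case
    have hεnn : 0 ≤ ε := by
      obtain ⟨j, hj⟩ : ∃ j, δ j ≠ 0 := Function.ne_iff.mp hδ0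
      have hjF : j ∈ Fbar := by
        by_contra hc
        refine hj ?_
        have : δ j = β j - β' j := rfl
        rw [this, hβ j hc, hβ' j hc, sub_zero]
      exact le_trans (abs_nonneg _) (hε j hjF)
    have hδsupp : ∀ j ∉ Fbar, δ j = 0 := by
      intro j hj
      have : δ j = β j - β' j := rfl
      rw [this, hβ j hj, hβ' j hj, sub_zero]
    -- energy identity
    have henergy : ∑ i, (X.mulVec δ i)^2 = ∑ j ∈ Fbar, δ j * (∑ i, X i j * X.mulVec δ i) := by
      have h1 : ∑ i, (X.mulVec δ i)^2 = ∑ i, ∑ j, (X i j * δ j) * X.mulVec δ i := by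
        apply Finset.sum_congr rfl
        intro i _
        rw [sq]
        nth_rewrite 1 [show X.mulVec δ i = ∑ j, X i j * δ j from rfl]
        rw [Finset.sum_mul]
      rw [h1, Finset.sum_comm]
      rw [← Finset.sum_subset (Finset.subset_univ Fbar)]
      · apply Finset.sum_congr rfl
        intro j _
        rw [Finset.mul_sum]
        apply Finset.sum_congr rfl
        intro i _; ring
      · intro j _ hj
        simp [hδsupp j hj]
    -- bound energy
    have hbound : ∑ i, (X.mulVec δ i)^2 ≤ ε * ∑ j ∈ Fbar, |δ j| := by
      rw [henergy, Finset.mul_sum]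
      apply Finset.sum_le_sum
      intro j hj
      calc δ j * (∑ i, X i j * X.mulVec δ i)
          ≤ |δ j * (∑ i, X i j * X.mulVec δ i)| := le_abs_self _
        _ = |δ j| * |∑ i, X i j * X.mulVec δ i| := abs_mul _ _
        _ ≤ |δ j| * ε := by
            apply mul_le_mul_of_nonneg_left (hcorr j hj) (abs_nonneg _)
        _ = ε * |δ j| := mul_comm _ _
    -- Cauchy-Schwarz : ∑|δ| ≤ √card * √S
    have hCS : ∑ j ∈ Fbar, |δ j| ≤ Real.sqrt (Fbar.card : ℝ) * Real.sqrt S := by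
      have h := Finset.sum_mul_sq_le_sq_mul_sq Fbar (fun _ => (1:ℝ)) (fun j => |δ j|)
      simp only [one_mul, one_pow, Finset.sum_const, nsmul_eq_mul, mul_one, sq_abs] at h
      have hsub : ∑ j ∈ Fbar, (δ j)^2 ≤ S := by
        apply Finset.sum_le_sum_of_subset_of_nonneg (Finset.subset_univ Fbar)
        intro j _ _; exact sq_nonneg _
      have h2 : (∑ j ∈ Fbar, |δ j|)^2 ≤ (Fbar.card : ℝ) * S := by
        calc (∑ j ∈ Fbar, |δ j|)^2 ≤ (Fbar.card : ℝ) * ∑ j ∈ Fbar, (δ j)^2 := h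
          _ ≤ (Fbar.card : ℝ) * S := by
              apply mul_le_mul_of_nonneg_left hsub (Nat.cast_nonneg _)
      have := Real.sqrt_le_sqrt h2
      rwa [Real.sqrt_sq (Finset.sum_nonneg fun j _ => abs_nonneg _), Real.sqrt_mul (Nat.cast_nonneg _)] at this
    -- restricted eigenvalue
    have hRE := hre δ hδsupp hδ0
    have hchain : ρ * S ≤ (1/(n:ℝ)) * (ε * (Real.sqrt (Fbar.card : ℝ) * Real.sqrt S)) := by
      calc ρ * S ≤ (1/(n:ℝ)) * ∑ i, (X.mulVec δ i)^2 := hRE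
        _ ≤ (1/(n:ℝ)) * (ε * ∑ j ∈ Fbar, |δ j|) := by
            apply mul_le_mul_of_nonneg_left hbound (by positivity)
        _ ≤ (1/(n:ℝ)) * (ε * (Real.sqrt (Fbar.card : ℝ) * Real.sqrt S)) := by
            apply mul_le_mul_of_nonneg_left _ (by positivity)
            exact mul_le_mul_of_nonneg_left hCS hεnn
    have hSpos : 0 < S := by
      obtain ⟨j, hj⟩ : ∃ j, δ j ≠ 0 := Function.ne_iff.mp hδ0
      have : 0 < (δ j)^2 := by positivity
      apply lt_of_lt_of_le this
      apply Finset.single_le_sum (fun k _ => sq_nonneg (δ k)) (Finset.mem_univ j)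
    have hsqSpos : 0 < Real.sqrt S := Real.sqrt_pos.mpr hSpos
    have hSeq : S = Real.sqrt S * Real.sqrt S := (Real.mul_self_sqrt hSnn).symm
    have step : ρ * Real.sqrt S ≤ ε * Real.sqrt (Fbar.card : ℝ) / n := by
      have h2 : ρ * Real.sqrt S * Real.sqrt S ≤ (ε * Real.sqrt (Fbar.card : ℝ) / n) * Real.sqrt S := by
        calc ρ * Real.sqrt S * Real.sqrt S = ρ * S := by
              rw [mul_assoc, Real.mul_self_sqrt hSnn]
          _ ≤ (1/(n:ℝ)) * (ε * (Real.sqrt (Fbar.card : ℝ) * Real.sqrt S)) := hchain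
          _ = (ε * Real.sqrt (Fbar.card : ℝ) / n) * Real.sqrt S := by ring
      exact le_of_mul_le_mul_right h2 hsqSpos
    have hfin : Real.sqrt S ≤ ε * Real.sqrt (Fbar.card : ℝ) / (n * ρ) := by
      rw [div_mul_eq_div_div]
      rw [le_div_iff₀ hρ]
      linarith [step]
    have hlast : ε * Real.sqrt (Fbar.card : ℝ) / ((n:ℝ) * ρ) ≤
        ε / ρ * Real.sqrt ((Fbar.card : ℝ) / (n : ℝ)) := by
      rw [Real.sqrt_div (Nat.cast_nonneg _), div_mul_div_comm]
      have hsn : 0 < Real.sqrt (n:ℝ) := Real.sqrt_pos.mpr hnR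
      have hsn1 : (1:ℝ) ≤ Real.sqrt (n:ℝ) := by
        rw [show (1:ℝ) = Real.sqrt 1 from (Real.sqrt_one).symm]
        exact Real.sqrt_le_sqrt (by exact_mod_cast hn)
      have hsle : Real.sqrt (n:ℝ) ≤ (n:ℝ) := by
        nlinarith [Real.mul_self_sqrt hnR.le]
      apply div_le_div_of_nonneg_left (mul_nonneg hεnn (Real.sqrt_nonneg _)) (by positivity)
      nlinarith
    exact le_trans hfin hlast
end
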